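/- Let J = Σ_{n≥0}(a_n(x)/n!)D^n with deg a_n ≤ n, acting also on the dual space via ᵗJ(u) = Σ_{n≥0}((−1)^n/n!)D^n(a_n u), and similarly J^(m)(u) = Σ_{n≥0}((−1)^n/n!)D^n(a_{n+m} u). Then for any polynomial f and any linear functional u: J(fu) = Σ_{n≥0} ((−1)^n/n!) f^(n)(x) J^(n)(u). -/

import Mathlib

open Polynomial

private lemma tri9 (B : ℕ) (F : ℕ → ℕ → ℂ) :
    ∑ n ∈ Finset.range B, ∑ j ∈ Finset.range (B - n), F n j
    = ∑ m ∈ Finset.range B, ∑ n ∈ Finset.range (m + 1), F n (m - n) := by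
  rw [Finset.sum_sigma', Finset.sum_sigma']
  refine Finset.sum_nbij' (fun x => ⟨x.1 + x.2, x.1⟩) (fun x => ⟨x.2, x.1 - x.2⟩) ?_ ?_ ?_ ?_ ?_
  · rintro ⟨n, j⟩ h
    simp only [Finset.mem_sigma, Finset.mem_range] at h ⊢
    omega
  · rintro ⟨m, n⟩ h
    simp only [Finset.mem_sigma, Finset.mem_range] at h ⊢
    omega
  · rintro ⟨n, j⟩ h
    simp
  · rintro ⟨m, n⟩ h
    simp only [Finset.mem_sigma, Finset.mem_range] at h
    simp only [Sigma.mk.inj_iff]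
    constructor
    · omega
    · exact heq_of_eq rfl
  · rintro ⟨n, j⟩ h
    simp

private lemma factinv9 (i j : ℕ) :
    (((i + j).factorial : ℂ))⁻¹ * (((i + j).choose i : ℕ) : ℂ) =
      ((i.factorial : ℂ))⁻¹ * ((j.factorial : ℂ))⁻¹ := by
  have h : (((i + j).choose i : ℕ) : ℂ) * (i.factorial : ℂ) * (j.factorial : ℂ)
      = ((i + j).factorial : ℂ) := by
    rw [Nat.choose_symm_add]
    exact_mod_cast congrArg (Nat.cast : ℕ → ℂ) (Nat.add_choose_mul_factorial_mul_factorial i j)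
  have h1 : ((i + j).factorial : ℂ) ≠ 0 := Nat.cast_ne_zero.2 (Nat.factorial_ne_zero _)
  have h2 : (i.factorial : ℂ) ≠ 0 := Nat.cast_ne_zero.2 (Nat.factorial_ne_zero _)
  have h3 : (j.factorial : ℂ) ≠ 0 := Nat.cast_ne_zero.2 (Nat.factorial_ne_zero _)
  field_simp
  linear_combination h

private lemma alt9 (m : ℕ) :
    ∑ n ∈ Finset.range (m + 1), (-1 : ℂ) ^ n * ((m.choose n : ℕ) : ℂ)
      = if m = 0 then 1 else 0 := by
  have h := Int.alternating_sum_range_choose (n := m)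
  have := congrArg (Int.cast : ℤ → ℂ) h
  push_cast at this
  simpa [apply_ite (Int.cast : ℤ → ℂ)] using this

private lemma keyC9 (V : ℕ → ℂ) (N M : ℕ) (hN : 0 < N) (hM : 0 < M)
    (hV : ∀ m, min N M ≤ m → V m = 0) :
    ∑ n ∈ Finset.range N, ∑ j ∈ Finset.range M,
      ((-1 : ℂ) ^ n * ((n.factorial : ℂ))⁻¹ * ((j.factorial : ℂ))⁻¹) * V (n + j) = V 0 := by
  set B := min N M with hB
  have hB0 : 0 < B := lt_min hN hM
  have step1 : ∑ n ∈ Finset.range N, ∑ j ∈ Finset.range M,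
      ((-1 : ℂ) ^ n * ((n.factorial : ℂ))⁻¹ * ((j.factorial : ℂ))⁻¹) * V (n + j)
      = ∑ n ∈ Finset.range B, ∑ j ∈ Finset.range (B - n),
      ((-1 : ℂ) ^ n * ((n.factorial : ℂ))⁻¹ * ((j.factorial : ℂ))⁻¹) * V (n + j) := by
    rw [← Finset.sum_subset (Finset.range_subset_range.2 (min_le_left N M))
      (by
        intro n hn hn'
        simp only [Finset.mem_range] at hn hn'
        apply Finset.sum_eq_zero
        intro j _
        rw [hV (n + j) (by omega), mul_zero])]
    apply Finset.sum_congr rfl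
    intro n hn
    simp only [Finset.mem_range] at hn
    rw [← Finset.sum_subset (Finset.range_subset_range.2 (by omega : B - n ≤ M))
      (by
        intro j hj hj'
        simp only [Finset.mem_range] at hj hj'
        rw [hV (n + j) (by omega), mul_zero])]
  rw [step1, tri9]
  have step2 : ∀ m ∈ Finset.range B, ∑ n ∈ Finset.range (m + 1),
      ((-1 : ℂ) ^ n * ((n.factorial : ℂ))⁻¹ * (((m - n).factorial : ℂ))⁻¹) * V (n + (m - n))
      = (if m = 0 then 1 else 0) * ((m.factorial : ℂ))⁻¹ * V m := by
    intro m _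
    rw [← alt9, Finset.sum_mul, Finset.sum_mul]
    apply Finset.sum_congr rfl
    intro n hn
    simp only [Finset.mem_range] at hn
    have hnm : n ≤ m := by omega
    have h1 : n + (m - n) = m := by omega
    have h2 : ((n.factorial : ℂ))⁻¹ * (((m - n).factorial : ℂ))⁻¹
        = ((m.factorial : ℂ))⁻¹ * ((m.choose n : ℕ) : ℂ) := by
      have := factinv9 n (m - n)
      rw [h1] at this
      rw [← this]
    rw [h1]
    rw [mul_assoc ((-1:ℂ)^n), h2]
    ring
  rw [Finset.sum_congr rfl step2]
  rw [Finset.sum_eq_single_of_mem 0 (Finset.mem_range.2 hB0)]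
  · simp
  · intro m _ hm
    simp [hm]

/-- `J(fu) = Σ_{n≥0} ((−1)^n/n!) f^{(n)}(x) J^{(n)}(u)` : evaluated on a test polynomial `p`,
the left-hand side is `⟨fu, J(p)⟩ = ⟨u, f·J(p)⟩` and the `n`-th term of the right-hand side is
`((−1)^n/n!)⟨J^{(n)}(u), f^{(n)} p⟩ = ((−1)^n/n!)⟨u, J^{(n)}(f^{(n)} p)⟩`. -/
theorem stmt9 (a : ℕ → Polynomial ℂ) (hdeg : ∀ ν, (a ν).degree ≤ (ν : ℕ))
    (Jm : ℕ → Polynomial ℂ → Polynomial ℂ)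
    (hJm : ∀ m p, Jm m p = ∑ n ∈ Finset.range (p.natDegree + 1),
        ((Nat.factorial n : ℂ))⁻¹ • (a (n + m) * Polynomial.derivative^[n] p))
    (f : Polynomial ℂ) (u : Module.Dual ℂ (Polynomial ℂ)) :
    ∀ p : Polynomial ℂ,
      u (f * Jm 0 p) = ∑ n ∈ Finset.range (f.natDegree + 1),
        ((-1 : ℂ) ^ n * ((Nat.factorial n : ℂ))⁻¹) *
          u (Jm n (Polynomial.derivative^[n] f * p)) := by
  intro p
  set N := f.natDegree + p.natDegree + 1 with hNdef
  -- extension of the defining sum of `Jm` to any big range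
  have hext : ∀ (m : ℕ) (q : Polynomial ℂ), q.natDegree < N →
      Jm m q = ∑ n ∈ Finset.range N,
        ((n.factorial : ℂ))⁻¹ • (a (n + m) * derivative^[n] q) := by
    intro m q hq
    rw [hJm]
    apply Finset.sum_subset (Finset.range_subset_range.2 (by omega))
    intro k _ hk
    simp only [Finset.mem_range] at hk
    rw [Polynomial.iterate_derivative_eq_zero (by omega), mul_zero, smul_zero]
  have hDf : ∀ n : ℕ, (derivative^[n] f).natDegree ≤ f.natDegree :=
    fun n => (Polynomial.natDegree_iterate_derivative f n).trans (Nat.sub_le _ _)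
  have hfp : ∀ n : ℕ, (derivative^[n] f * p).natDegree < N := fun n =>
    (Polynomial.natDegree_mul_le).trans_lt (by have := hDf n; omega)
  -- LHS
  have hL : u (f * Jm 0 p)
      = ∑ k ∈ Finset.range N, ((k.factorial : ℂ))⁻¹ * u (a k * (f * derivative^[k] p)) := by
    rw [hext 0 p (by omega), Finset.mul_sum, map_sum]
    refine Finset.sum_congr rfl fun k _ => ?_
    rw [mul_smul_comm, map_smul, smul_eq_mul]
    congr 2
    rw [Nat.add_zero]
    ring
  rw [hL]
  -- RHS: extend the outer sum to `range N`
  have hR1 : ∑ n ∈ Finset.range (f.natDegree + 1),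
        ((-1 : ℂ) ^ n * ((n.factorial : ℂ))⁻¹) * u (Jm n (derivative^[n] f * p))
      = ∑ n ∈ Finset.range N,
        ((-1 : ℂ) ^ n * ((n.factorial : ℂ))⁻¹) * u (Jm n (derivative^[n] f * p)) := by
    apply Finset.sum_subset (Finset.range_subset_range.2 (by omega))
    intro n _ hn
    simp only [Finset.mem_range] at hn
    rw [Polynomial.iterate_derivative_eq_zero (by omega : f.natDegree < n), zero_mul]
    have hz : Jm n 0 = 0 := by
      rw [hJm]
      apply Finset.sum_eq_zero
      intro k _
      simp [Polynomial.iterate_derivative_zero]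
    rw [hz, map_zero, mul_zero]
  rw [hR1]
  -- expand each `Jm` term into the triple sum
  have hR2 : ∀ n ∈ Finset.range N,
      ((-1 : ℂ) ^ n * ((n.factorial : ℂ))⁻¹) * u (Jm n (derivative^[n] f * p))
      = ∑ k ∈ Finset.range N, ∑ i ∈ Finset.range N,
          ((-1 : ℂ) ^ n * ((n.factorial : ℂ))⁻¹) * (((k.factorial : ℂ))⁻¹ *
            (((k.choose i : ℕ) : ℂ) *
              u (a (k + n) * (derivative^[k - i + n] f * derivative^[i] p)))) := by
    intro n hn
    rw [hext n _ (hfp n), map_sum, Finset.mul_sum]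
    refine Finset.sum_congr rfl fun k hk => ?_
    simp only [Finset.mem_range] at hk
    rw [map_smul, smul_eq_mul, Polynomial.iterate_derivative_mul]
    have hleib : ∑ i ∈ Finset.range (Nat.succ k),
          k.choose i • (derivative^[k - i] (derivative^[n] f) * derivative^[i] p)
        = ∑ i ∈ Finset.range N,
          k.choose i • (derivative^[k - i] (derivative^[n] f) * derivative^[i] p) := by
      apply Finset.sum_subset (Finset.range_subset_range.2 (by omega))
      intro i _ hi
      simp only [Finset.mem_range] at hi
      rw [Nat.choose_eq_zero_of_lt (by omega), zero_smul]
    rw [hleib]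
    simp only [Finset.mul_sum, map_sum]
    refine Finset.sum_congr rfl fun i _ => ?_
    rw [← Nat.cast_smul_eq_nsmul ℂ, mul_smul_comm, map_smul, smul_eq_mul]
    rw [← Function.iterate_add_apply]
  rw [Finset.sum_congr rfl hR2]
  -- reorder the sums: bring `i` outermost
  have hsw1 : ∀ n ∈ Finset.range N, ∑ k ∈ Finset.range N, ∑ i ∈ Finset.range N,
        ((-1 : ℂ) ^ n * ((n.factorial : ℂ))⁻¹) * (((k.factorial : ℂ))⁻¹ *
          (((k.choose i : ℕ) : ℂ) *
            u (a (k + n) * (derivative^[k - i + n] f * derivative^[i] p))))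
      = ∑ i ∈ Finset.range N, ∑ k ∈ Finset.range N,
        ((-1 : ℂ) ^ n * ((n.factorial : ℂ))⁻¹) * (((k.factorial : ℂ))⁻¹ *
          (((k.choose i : ℕ) : ℂ) *
            u (a (k + n) * (derivative^[k - i + n] f * derivative^[i] p)))) :=
    fun n _ => Finset.sum_comm
  rw [Finset.sum_congr rfl hsw1, Finset.sum_comm]
  -- for each `i` and `n`, reindex the `k`-sum as `k = i + j`
  have hkstep : ∀ i ∈ Finset.range N, ∀ n ∈ Finset.range N,
      ∑ k ∈ Finset.range N,
        ((-1 : ℂ) ^ n * ((n.factorial : ℂ))⁻¹) * (((k.factorial : ℂ))⁻¹ *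
          (((k.choose i : ℕ) : ℂ) *
            u (a (k + n) * (derivative^[k - i + n] f * derivative^[i] p))))
      = ∑ j ∈ Finset.range (N - i),
        ((i.factorial : ℂ))⁻¹ *
          (((-1 : ℂ) ^ n * ((n.factorial : ℂ))⁻¹ * ((j.factorial : ℂ))⁻¹) *
            u (a (i + (n + j)) * (derivative^[n + j] f * derivative^[i] p))) := by
    intro i hi n _
    simp only [Finset.mem_range] at hi
    have hrestr : ∑ k ∈ Finset.range N,
        ((-1 : ℂ) ^ n * ((n.factorial : ℂ))⁻¹) * (((k.factorial : ℂ))⁻¹ *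
          (((k.choose i : ℕ) : ℂ) *
            u (a (k + n) * (derivative^[k - i + n] f * derivative^[i] p))))
        = ∑ k ∈ Finset.Ico i N,
        ((-1 : ℂ) ^ n * ((n.factorial : ℂ))⁻¹) * (((k.factorial : ℂ))⁻¹ *
          (((k.choose i : ℕ) : ℂ) *
            u (a (k + n) * (derivative^[k - i + n] f * derivative^[i] p)))) := by
      rw [Finset.range_eq_Ico]
      symm
      apply Finset.sum_subset (Finset.Ico_subset_Ico (Nat.zero_le i) le_rfl)
      intro k hk hk'
      simp only [Finset.mem_Ico] at hk hk'
      rw [Nat.choose_eq_zero_of_lt (by omega), Nat.cast_zero, zero_mul, mul_zero, mul_zero]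
    rw [hrestr, Finset.sum_Ico_eq_sum_range]
    refine Finset.sum_congr rfl fun j hj => ?_
    have e1 : i + j - i + n = n + j := by omega
    have e2 : i + j + n = i + (n + j) := by omega
    rw [e1, e2, ← mul_assoc (((i + j).factorial : ℂ))⁻¹, factinv9]
    ring
  rw [Finset.sum_congr rfl (fun i hi => Finset.sum_congr rfl (hkstep i hi))]
  -- apply the key convolution identity for each `i`
  refine Eq.symm (Finset.sum_congr rfl fun i hi => ?_)
  simp only [Finset.mem_range] at hi
  simp only [← Finset.mul_sum]
  have hkey : ∑ x ∈ Finset.range N, ∑ j ∈ Finset.range (N - i),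
      ((-1 : ℂ) ^ x * ((x.factorial : ℂ))⁻¹ * ((j.factorial : ℂ))⁻¹) *
        u (a (i + (x + j)) * (derivative^[x + j] f * derivative^[i] p))
      = u (a (i + 0) * (derivative^[0] f * derivative^[i] p)) := by
    refine keyC9 (fun m => u (a (i + m) * (derivative^[m] f * derivative^[i] p))) N (N - i)
      (by omega) (by omega) ?_
    intro m hm
    by_cases hip : p.natDegree < i
    · beta_reduce
      rw [Polynomial.iterate_derivative_eq_zero hip, mul_zero, mul_zero, map_zero]
    · have hdm : f.natDegree < m := by omega
      beta_reduce
      rw [Polynomial.iterate_derivative_eq_zero hdm, zero_mul, mul_zero, map_zero]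
  rw [hkey]
  simp only [Nat.add_zero, Function.iterate_zero_apply]
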